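/- Let p_x(x) = −(1/2)sgn(x)e^{−|x|} and u_a(t,x) = a e^{−|x−ct|}. Then for x > ct, p_x * [(k₁ + 3k₂/2)u_a(∂_x u_a)² + (7k₁/9 + 7k₂/6)u_a³ + k₃u_a² + (k₃/2)(∂_x u_a)²](x) = a³(2k₁/3 + k₂)(e^{3(ct−x)} − e^{ct−x}) + a²k₃(e^{2(ct−x)} − e^{ct−x}). -/

import Mathlib

open MeasureTheory Real Set Filter

/-- `p_x(x) = -(1/2) sgn(x) e^{-|x|}`. -/
noncomputable def pxker (x : ℝ) : ℝ := -(1/2) * Real.sign x * Real.exp (-|x|)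

/-- The peakon `u_a(t,x) = a e^{-|x-ct|}`. -/
noncomputable def upk (a c t x : ℝ) : ℝ := a * Real.exp (-|x - c*t|)

/-- The (a.e.) spatial derivative of the peakon: `∂_x u_a = -sgn(x-ct) u_a`. -/
noncomputable def upkx (a c t x : ℝ) : ℝ := -(Real.sign (x - c*t)) * upk a c t x

lemma exp_mul_exp_div (u v w d : ℝ) (h : u + v = w) :
    Real.exp u * (Real.exp v / d) = Real.exp w / d := by
  rw [← h, Real.exp_add]; ring

lemma exp_mul_exp_sub_div (u v w v' w' d : ℝ) (h1 : u + v = v') (h2 : u + w = w') :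
    Real.exp u * ((Real.exp v - Real.exp w)/d) = (Real.exp v' - Real.exp w')/d := by
  rw [← h1, ← h2, Real.exp_add, Real.exp_add]; ring

lemma expIntOn_Iic {b : ℝ} (hb : 0 < b) (s : ℝ) :
    IntegrableOn (fun y : ℝ => Real.exp (b*y)) (Iic s) := by
  rw [← (Measure.measurePreserving_neg (volume : Measure ℝ)).integrableOn_comp_preimage
      (Homeomorph.neg ℝ).measurableEmbedding]
  simp only [Function.comp_def, neg_preimage, neg_Iic, mul_neg, ← neg_mul]
  rw [integrableOn_Ici_iff_integrableOn_Ioi]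
  exact exp_neg_integrableOn_Ioi (-s) hb

lemma int_exp_Iic {b : ℝ} (hb : 0 < b) (s : ℝ) :
    ∫ y in Iic s, Real.exp (b*y) = Real.exp (b*s) / b := by
  have hderiv : ∀ y ∈ Iio s, HasDerivAt (fun y => Real.exp (b*y)/b) (Real.exp (b*y)) y := by
    intro y _
    have h := (((hasDerivAt_id y).const_mul b).exp).div_const b
    simpa [mul_comm, mul_div_assoc, mul_div_cancel_left₀, hb.ne'] using h
  have hcont : ContinuousWithinAt (fun y => Real.exp (b*y)/b) (Iic s) s :=
    ((Real.continuous_exp.comp (continuous_const.mul continuous_id)).div_const b).continuousWithinAt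
  have htend : Tendsto (fun y => Real.exp (b*y)/b) atBot (nhds 0) := by
    have h1 : Tendsto (fun y : ℝ => b*y) atBot atBot := tendsto_id.const_mul_atBot hb
    have := (Real.tendsto_exp_atBot.comp h1).div_const b
    simpa using this
  simpa using integral_Iic_of_hasDerivAt_of_tendsto hcont hderiv (expIntOn_Iic hb s) htend

lemma int_exp_Ioi {b : ℝ} (hb : 0 < b) (s : ℝ) :
    ∫ y in Ioi s, Real.exp (-(b*y)) = Real.exp (-(b*s)) / b := by
  have hint : IntegrableOn (fun y : ℝ => Real.exp (-(b*y))) (Ioi s) := by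
    simpa [neg_mul] using exp_neg_integrableOn_Ioi s hb
  have hderiv : ∀ y ∈ Ioi s, HasDerivAt (fun y => -(Real.exp (-(b*y))/b)) (Real.exp (-(b*y))) y := by
    intro y _
    have h := ((((hasDerivAt_id y).const_mul b).neg).exp.div_const b).neg
    exact h.congr_deriv (by simp; field_simp [hb.ne'])
  have hcont : ContinuousWithinAt (fun y => -(Real.exp (-(b*y))/b)) (Ici s) s := by
    exact (((Real.continuous_exp.comp (continuous_const.mul continuous_id).neg).div_const b).neg).continuousWithinAt
  have htend : Tendsto (fun y => -(Real.exp (-(b*y))/b)) atTop (nhds 0) := by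
    have h1 : Tendsto (fun y : ℝ => -(b*y)) atTop atBot := by
      exact tendsto_neg_atBot_iff.mpr (tendsto_id.const_mul_atTop hb)
    have := ((Real.tendsto_exp_atBot.comp h1).div_const b).neg
    simpa using this
  have := integral_Ioi_of_hasDerivAt_of_tendsto hcont hderiv hint htend
  rw [this]; ring

lemma int_exp_Ioc {b : ℝ} (hb : b ≠ 0) (s x : ℝ) (hsx : s ≤ x) :
    ∫ y in Ioc s x, Real.exp (b*y) = (Real.exp (b*x) - Real.exp (b*s)) / b := by
  rw [← intervalIntegral.integral_of_le hsx]
  have hderiv : ∀ y ∈ Set.uIcc s x, HasDerivAt (fun y => Real.exp (b*y)/b) (Real.exp (b*y)) y := by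
    intro y _
    have h := (((hasDerivAt_id y).const_mul b).exp).div_const b
    simpa [mul_comm, mul_div_assoc, mul_div_cancel_left₀, hb] using h
  have := intervalIntegral.integral_eq_sub_of_hasDerivAt hderiv
    ((Real.continuous_exp.comp (continuous_const.mul continuous_id)).intervalIntegrable s x)
  rw [this]; ring

lemma conv_exp (s x n : ℝ) (hsx : s < x) (hn : 1 < n) :
    Integrable (fun y : ℝ => pxker (x - y) * Real.exp (-(n * |y - s|))) ∧
    (∫ y : ℝ, pxker (x - y) * Real.exp (-(n * |y - s|)))
      = n/(n^2-1) * (Real.exp (n*(s-x)) - Real.exp (s-x)) := by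
  have hn0 : (0:ℝ) < n := lt_trans one_pos hn
  have h1n : (0:ℝ) < 1 + n := by linarith
  have h1mn : (1:ℝ) - n ≠ 0 := by intro h; nlinarith [h]
  set g : ℝ → ℝ := fun y => pxker (x - y) * Real.exp (-(n * |y - s|)) with hg
  have hIic : EqOn g (fun y => (-(1/2) * Real.exp (-x - n*s)) * Real.exp ((1+n)*y)) (Iic s) := by
    intro y hy
    simp only [mem_Iic] at hy
    have hxy : (0:ℝ) < x - y := by linarith
    have hys : y - s ≤ 0 := by linarith
    simp only [hg, pxker, Real.sign_of_pos hxy, abs_of_pos hxy, abs_of_nonpos hys]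
    have e : Real.exp (-(x-y)) * Real.exp (-(n * -(y-s)))
        = Real.exp (-x - n*s) * Real.exp ((1+n)*y) := by
      rw [← Real.exp_add, ← Real.exp_add]; congr 1; ring
    linear_combination (-(1/2) : ℝ) * e
  have hIoo : EqOn g (fun y => (-(1/2) * Real.exp (n*s - x)) * Real.exp ((1-n)*y)) (Ioo s x) := by
    intro y hy
    have hxy : (0:ℝ) < x - y := by linarith [hy.2]
    have hys : (0:ℝ) ≤ y - s := by linarith [hy.1]
    simp only [hg, pxker, Real.sign_of_pos hxy, abs_of_pos hxy, abs_of_nonneg hys]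
    have e : Real.exp (-(x-y)) * Real.exp (-(n * (y-s)))
        = Real.exp (n*s - x) * Real.exp ((1-n)*y) := by
      rw [← Real.exp_add, ← Real.exp_add]; congr 1; ring
    linear_combination (-(1/2) : ℝ) * e
  have hIoi : EqOn g (fun y => ((1/2) * Real.exp (x + n*s)) * Real.exp (-((1+n)*y))) (Ioi x) := by
    intro y hy
    simp only [mem_Ioi] at hy
    have hxy : x - y < 0 := by linarith
    have hys : (0:ℝ) ≤ y - s := by linarith
    simp only [hg, pxker, Real.sign_of_neg hxy, abs_of_neg hxy, abs_of_nonneg hys]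
    have e : Real.exp (-(-(x-y))) * Real.exp (-(n * (y-s)))
        = Real.exp (x + n*s) * Real.exp (-((1+n)*y)) := by
      rw [← Real.exp_add, ← Real.exp_add]; congr 1; ring
    linear_combination (1/2 : ℝ) * e
  have iIic : IntegrableOn g (Iic s) :=
    IntegrableOn.congr_fun ((expIntOn_Iic h1n s).const_mul _) hIic.symm measurableSet_Iic
  have iIoo : IntegrableOn g (Ioo s x) := by
    refine IntegrableOn.congr_fun ?_ hIoo.symm measurableSet_Ioo
    refine Integrable.const_mul ?_ _
    exact ((Real.continuous_exp.comp (continuous_const.mul continuous_id)).integrableOn_Icc).mono_set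
      Ioo_subset_Icc_self
  have hx0 : IntegrableOn g {x} := by
    unfold IntegrableOn
    rw [Measure.restrict_eq_zero.mpr (measure_singleton x)]
    exact integrable_zero_measure
  have iIoc : IntegrableOn g (Ioc s x) := by
    have hu : Ioo s x ∪ {x} = Ioc s x := Ioo_union_right hsx
    rw [← hu]
    exact integrableOn_union.mpr ⟨iIoo, hx0⟩
  have iIoi : IntegrableOn g (Ioi x) := by
    refine IntegrableOn.congr_fun ?_ hIoi.symm measurableSet_Ioi
    refine Integrable.const_mul ?_ _
    have h := exp_neg_integrableOn_Ioi x h1n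
    simp only [neg_mul] at h
    exact h
  have iIois : IntegrableOn g (Ioi s) := by
    rw [← Ioc_union_Ioi_eq_Ioi hsx.le]
    exact integrableOn_union.mpr ⟨iIoc, iIoi⟩
  have hint : Integrable g := by
    rw [← integrableOn_univ, ← Iic_union_Ioi (a := s)]
    exact integrableOn_union.mpr ⟨iIic, iIois⟩
  refine ⟨hint, ?_⟩
  have hsplit : ∫ y in Ioi s, g y = (∫ y in Ioc s x, g y) + ∫ y in Ioi x, g y := by
    rw [← Ioc_union_Ioi_eq_Ioi hsx.le]
    exact setIntegral_union (Ioc_disjoint_Ioi le_rfl) measurableSet_Ioi iIoc iIoi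
  have I1 : ∫ y in Iic s, g y = -(Real.exp (s-x) / (2*(1+n))) := by
    rw [setIntegral_congr_fun measurableSet_Iic hIic, integral_const_mul, int_exp_Iic h1n s, mul_assoc,
      exp_mul_exp_div _ _ (s-x) _ (by ring)]
    field_simp [h1n.ne']
  have I2 : ∫ y in Ioc s x, g y
      = -((Real.exp (n*(s-x)) - Real.exp (s-x)) / (2*(1-n))) := by
    rw [integral_Ioc_eq_integral_Ioo, setIntegral_congr_fun measurableSet_Ioo hIoo,
      integral_const_mul, ← integral_Ioc_eq_integral_Ioo, int_exp_Ioc h1mn s x hsx.le, mul_assoc,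
      exp_mul_exp_sub_div _ _ _ (n*(s-x)) (s-x) _ (by ring) (by ring)]
    field_simp [h1mn]
  have I3 : ∫ y in Ioi x, g y = Real.exp (n*(s-x)) / (2*(1+n)) := by
    rw [setIntegral_congr_fun measurableSet_Ioi hIoi, integral_const_mul, int_exp_Ioi h1n x, mul_assoc,
      exp_mul_exp_div _ _ (n*(s-x)) _ (by ring)]
    field_simp [h1n.ne']
  calc ∫ y, g y = (∫ y in Iic s, g y) + ∫ y in Ioi s, g y :=
        (intervalIntegral.integral_Iic_add_Ioi iIic iIois).symm
    _ = -(Real.exp (s-x) / (2*(1+n)))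
        + (-((Real.exp (n*(s-x)) - Real.exp (s-x)) / (2*(1-n)))
          + Real.exp (n*(s-x)) / (2*(1+n))) := by rw [hsplit, I1, I2, I3]
    _ = n/(n^2-1) * (Real.exp (n*(s-x)) - Real.exp (s-x)) := by
        have hne1 : (1:ℝ) + n ≠ 0 := h1n.ne'
        have hne2 : n^2 - 1 ≠ 0 := by
          intro h
          have : (1-n)*(1+n) = 0 := by linarith [h]
          rcases mul_eq_zero.mp this with h' | h'
          · exact h1mn h'
          · exact hne1 h'
        field_simp
        ring

/-- For `x > ct`,
`p_x * [(k₁+3k₂/2)u_a(∂_x u_a)² + (7k₁/9+7k₂/6)u_a³ + k₃u_a² + (k₃/2)(∂_x u_a)²](x)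
 = a³(2k₁/3+k₂)(e^{3(ct-x)} - e^{ct-x}) + a²k₃(e^{2(ct-x)} - e^{ct-x})`. -/
theorem peakon_convolution_formula (a c k₁ k₂ k₃ : ℝ) (ha : a ≠ 0) :
    ∀ t x : ℝ, c*t < x →
      (∫ y : ℝ, pxker (x - y) *
          ((k₁ + 3*k₂/2) * upk a c t y * (upkx a c t y)^2
            + (7*k₁/9 + 7*k₂/6) * (upk a c t y)^3
            + k₃ * (upk a c t y)^2
            + (k₃/2) * (upkx a c t y)^2))
      = a^3 * (2*k₁/3 + k₂) * (Real.exp (3*(c*t - x)) - Real.exp (c*t - x))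
        + a^2 * k₃ * (Real.exp (2*(c*t - x)) - Real.exp (c*t - x)) := by
  intro t x hx
  set s := c*t with hs
  have h3 := conv_exp s x 3 hx (by norm_num)
  have h2 := conv_exp s x 2 hx (by norm_num)
  have hcong : (fun y : ℝ => pxker (x - y) *
          ((k₁ + 3*k₂/2) * upk a c t y * (upkx a c t y)^2
            + (7*k₁/9 + 7*k₂/6) * (upk a c t y)^3
            + k₃ * (upk a c t y)^2
            + (k₃/2) * (upkx a c t y)^2))
      =ᵐ[volume] (fun y : ℝ =>
          ((16*k₁/9 + 8*k₂/3) * a^3) * (pxker (x - y) * Real.exp (-(3 * |y - s|)))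
        + ((3*k₃/2) * a^2) * (pxker (x - y) * Real.exp (-(2 * |y - s|)))) := by
    have hmem : ∀ᵐ (y : ℝ), y ≠ s := by
      rw [ae_iff]
      simpa [Set.setOf_eq_eq_singleton] using measure_singleton s
    filter_upwards [hmem] with y hy
    simp only [upk, upkx, ← hs]
    have hsgn : Real.sign (y - s) ^ 2 = 1 := by
      rcases Real.sign_apply_eq_of_ne_zero _ (sub_ne_zero.mpr hy) with h | h <;>
        rw [h] <;> norm_num
    have h3e : Real.exp (-(3*|y-s|)) = Real.exp (-|y-s|)^3 := by
      rw [show -(3*|y-s|) = -|y-s| + -|y-s| + -|y-s| by ring, Real.exp_add, Real.exp_add]; ring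
    have h2e : Real.exp (-(2*|y-s|)) = Real.exp (-|y-s|)^2 := by
      rw [show -(2*|y-s|) = -|y-s| + -|y-s| by ring, Real.exp_add]; ring
    rw [h3e, h2e]
    simp only [mul_pow, neg_sq, hsgn, one_mul]
    ring
  rw [integral_congr_ae hcong,
    integral_add (h3.1.const_mul _) (h2.1.const_mul _),
    integral_const_mul, integral_const_mul, h3.2, h2.2]
  norm_num
  ring
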